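/- Let v : ℝⁿ → ℝ be a multivariate polynomial of total degree at most M, fix x, b ∈ ℝⁿ, and for S ⊆ {1,...,n} let x_S denote the vector equal to x on coordinates in S and equal to b elsewhere. Define u(S) = v(x_S) - v(b) and I(S) = ∑_{T ⊆ S} (-1)^{|S|-|T|} u(T). Then I(S) = 0 for every S with |S| ≥ M+1. -/

import Mathlib

open Finset

lemma sign_split {a b : ℕ} (h : b ≤ a) : ((-1 : ℝ)) ^ (a - b) = (-1) ^ a * (-1) ^ b := by
  have h1 : (-1 : ℝ) ^ (a - b) * (-1) ^ b = (-1) ^ a := by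
    rw [← pow_add, Nat.sub_add_cancel h]
  calc ((-1 : ℝ)) ^ (a - b) = (-1 : ℝ) ^ (a - b) * ((-1) ^ b * (-1) ^ b) := by
        rw [← pow_add, Even.neg_one_pow ⟨b, rfl⟩, mul_one]
    _ = (-1) ^ a * (-1) ^ b := by rw [← mul_assoc, h1]

lemma key_identity {n : ℕ} (S : Finset (Fin n)) (f g : Fin n → ℝ) :
    ∑ T ∈ S.powerset, (-1 : ℝ) ^ (S.card - T.card) *
      ∏ i ∈ S, (if i ∈ T then f i else g i) = ∏ i ∈ S, (f i - g i) := by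
  have h := Finset.prod_add f (fun i => -g i) S
  simp only [sub_eq_add_neg]
  rw [h]
  apply Finset.sum_congr rfl
  intro T hT
  rw [Finset.mem_powerset] at hT
  have hsplit : ∏ i ∈ S, (if i ∈ T then f i else g i)
      = (∏ i ∈ T, f i) * ∏ i ∈ S \ T, g i := by
    rw [show (∏ i ∈ T, f i) = ∏ i ∈ T, (if i ∈ T then f i else g i) from
        Finset.prod_congr rfl (fun i hi => by rw [if_pos hi]),
      show (∏ i ∈ S \ T, g i) = ∏ i ∈ S \ T, (if i ∈ T then f i else g i) from
        Finset.prod_congr rfl (fun i hi => by rw [if_neg (Finset.mem_sdiff.mp hi).2]),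
      ← Finset.prod_union (Finset.disjoint_sdiff), Finset.union_sdiff_of_subset hT]
  rw [hsplit]
  have hneg : ∏ i ∈ S \ T, (-g i) = (-1 : ℝ) ^ (S \ T).card * ∏ i ∈ S \ T, g i := by
    rw [← Finset.prod_const, ← Finset.prod_mul_distrib]
    exact Finset.prod_congr rfl (fun i _ => by ring)
  rw [hneg, Finset.card_sdiff_of_subset hT]
  ring

theorem harsanyi_vanishes_above_degree (n M : ℕ) (hMn : M < n)
    (P : MvPolynomial (Fin n) ℝ) (hdeg : P.totalDegree ≤ M)
    (x b : Fin n → ℝ)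
    (u I : Finset (Fin n) → ℝ)
    (hu : ∀ S : Finset (Fin n),
      u S = MvPolynomial.eval (fun i => if i ∈ S then x i else b i) P -
            MvPolynomial.eval b P)
    (hI : ∀ S : Finset (Fin n), I S = ∑ T ∈ S.powerset, (-1 : ℝ) ^ (S.card - T.card) * u T) :
    ∀ S : Finset (Fin n), M + 1 ≤ S.card → I S = 0 := by
  intro S hS
  rw [hI]
  have hsign : ∀ T ∈ S.powerset, ((-1 : ℝ)) ^ (S.card - T.card)
      = (-1) ^ S.card * (-1) ^ T.card := fun T hT =>
    sign_split (Finset.card_le_card (Finset.mem_powerset.mp hT))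
  have hne : S ≠ ∅ := by
    intro h; rw [h, Finset.card_empty] at hS; omega
  have hconst : ∑ T ∈ S.powerset, ((-1 : ℝ)) ^ (S.card - T.card) = 0 := by
    have hz : ((∑ m ∈ S.powerset, (-1 : ℤ) ^ m.card : ℤ) : ℝ) = 0 := by
      rw [Finset.sum_powerset_neg_one_pow_card_of_nonempty
        (Finset.nonempty_of_ne_empty hne)]
      simp
    push_cast at hz
    rw [Finset.sum_congr rfl hsign, ← Finset.mul_sum, hz, mul_zero]
  simp only [hu]
  have hsplit : ∑ T ∈ S.powerset, (-1 : ℝ) ^ (S.card - T.card) *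
      (MvPolynomial.eval (fun i => if i ∈ T then x i else b i) P - MvPolynomial.eval b P)
      = (∑ T ∈ S.powerset, (-1 : ℝ) ^ (S.card - T.card) *
          MvPolynomial.eval (fun i => if i ∈ T then x i else b i) P)
        - (∑ T ∈ S.powerset, ((-1 : ℝ)) ^ (S.card - T.card)) * MvPolynomial.eval b P := by
    rw [Finset.sum_mul, ← Finset.sum_sub_distrib]
    exact Finset.sum_congr rfl (fun T _ => by ring)
  rw [hsplit, hconst, zero_mul, sub_zero]
  have heval : ∀ T : Finset (Fin n),
      MvPolynomial.eval (fun i => if i ∈ T then x i else b i) P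
      = ∑ d ∈ P.support, MvPolynomial.coeff d P *
          ∏ i, (if i ∈ T then x i else b i) ^ d i := fun T => MvPolynomial.eval_eq' _ _
  calc ∑ T ∈ S.powerset, (-1 : ℝ) ^ (S.card - T.card) *
          MvPolynomial.eval (fun i => if i ∈ T then x i else b i) P
      = ∑ d ∈ P.support, ∑ T ∈ S.powerset, (-1 : ℝ) ^ (S.card - T.card) *
          (MvPolynomial.coeff d P * ∏ i, (if i ∈ T then x i else b i) ^ d i) := by
        rw [Finset.sum_comm]
        exact Finset.sum_congr rfl (fun T _ => by rw [heval T, Finset.mul_sum])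
    _ = 0 := by
        apply Finset.sum_eq_zero
        intro d hd
        -- exists i ∈ S with d i = 0
        obtain ⟨j, hjS, hj0⟩ : ∃ j ∈ S, d j = 0 := by
          by_contra hcon
          push_neg at hcon
          have h1 : S.card ≤ ∑ i ∈ S, d i := by
            calc S.card = ∑ _i ∈ S, 1 := by simp
              _ ≤ ∑ i ∈ S, d i :=
                Finset.sum_le_sum (fun i hi => Nat.one_le_iff_ne_zero.mpr (hcon i hi))
          have h2 : ∑ i ∈ S, d i ≤ ∑ i, d i :=
            Finset.sum_le_sum_of_subset (Finset.subset_univ S)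
          have h3 : ∑ i, d i = d.sum (fun _ e => e) := by
            rw [Finsupp.sum]
            exact (Finset.sum_subset (Finset.subset_univ _)
              (fun i _ hi => Finsupp.notMem_support_iff.mp hi)).symm
          have h4 : d.sum (fun _ e => e) ≤ P.totalDegree :=
            MvPolynomial.le_totalDegree hd
          omega
        -- split the product over univ
        have hprod : ∀ T ∈ S.powerset,
            ∏ i, (if i ∈ T then x i else b i) ^ d i
            = (∏ i ∈ S, (if i ∈ T then x i ^ d i else b i ^ d i)) *
              ∏ i ∈ Sᶜ, b i ^ d i := by
          intro T hT
          rw [← Finset.prod_mul_prod_compl S (fun i => (if i ∈ T then x i else b i) ^ d i)]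
          congr 1
          · exact Finset.prod_congr rfl (fun i _ => apply_ite (· ^ d i) _ _ _)
          · apply Finset.prod_congr rfl
            intro i hi
            have : i ∉ T := fun h =>
              (Finset.mem_compl.mp hi) (Finset.mem_powerset.mp hT h)
            rw [if_neg this]
        calc ∑ T ∈ S.powerset, (-1 : ℝ) ^ (S.card - T.card) *
              (MvPolynomial.coeff d P * ∏ i, (if i ∈ T then x i else b i) ^ d i)
            = (MvPolynomial.coeff d P * ∏ i ∈ Sᶜ, b i ^ d i) *
              ∑ T ∈ S.powerset, (-1 : ℝ) ^ (S.card - T.card) *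
                ∏ i ∈ S, (if i ∈ T then x i ^ d i else b i ^ d i) := by
              rw [Finset.mul_sum]
              apply Finset.sum_congr rfl
              intro T hT
              rw [hprod T hT]; ring
          _ = 0 := by
              rw [key_identity S (fun i => x i ^ d i) (fun i => b i ^ d i)]
              rw [Finset.prod_eq_zero hjS (by rw [hj0]; simp)]
              ring
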